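/- The space 𝓗 of triples of projective lines in ℝP³ with pairwise distinct intersection points is homotopy equivalent to the complete flag variety Flag(ℝ⁴), the subspace of Gr(1,ℝ⁴) × Gr(2,ℝ⁴) × Gr(3,ℝ⁴) consisting of triples (V₁,V₂,V₃) with V₁ ⊂ V₂ ⊂ V₃. -/

import Mathlib

open Module Matrix CategoryTheory

noncomputable section

/-- `ℝ^m` with its Euclidean topology and inner ℝ product. -/
abbrev Euc (m : ℕ) : Type := EuclideanSpace ℝ (Fin m)

/-- The Grassmannian `Gr(k, ℝ^m)` of `k`-dimensional linear subspaces of `ℝ^m`. -/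
def Gr (k m : ℕ) : Type :=
  { V : Submodule ℝ (Euc m) // finrank ℝ V = k }

/-- The standard topology on the Grassmannian, induced by sending a subspace to the
orthogonal projection onto it. -/
noncomputable instance (k m : ℕ) : TopologicalSpace (Gr k m) :=
  TopologicalSpace.induced
    (fun V : Gr k m =>
      (V.1.subtypeL.comp V.1.orthogonalProjectionOnto : Euc m →L[ℝ] Euc m))
    inferInstance

/-- The condition that a triple of projective lines (i.e. 2-dimensional subspaces) has
pairwise distinct intersection points: each pairwise intersection is 1-dimensional, and
the three intersections are pairwise distinct. -/
def GoodTriple {m : ℕ} (p : Gr 2 m × Gr 2 m × Gr 2 m) : Prop :=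
  finrank ℝ ↥(p.1.1 ⊓ p.2.1.1) = 1 ∧
  finrank ℝ ↥(p.1.1 ⊓ p.2.2.1) = 1 ∧
  finrank ℝ ↥(p.2.1.1 ⊓ p.2.2.1) = 1 ∧
  p.1.1 ⊓ p.2.1.1 ≠ p.1.1 ⊓ p.2.2.1 ∧
  p.1.1 ⊓ p.2.1.1 ≠ p.2.1.1 ⊓ p.2.2.1 ∧
  p.1.1 ⊓ p.2.2.1 ≠ p.2.1.1 ⊓ p.2.2.1

/-- The space of triples of projective lines in `ℝP^{m-1}` with pairwise distinct
intersection points, as a subspace of `Gr(2,ℝ^m)³`. -/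
def Triples (m : ℕ) : Type :=
  { p : Gr 2 m × Gr 2 m × Gr 2 m // GoodTriple p }

instance (m : ℕ) : TopologicalSpace (Triples m) :=
  inferInstanceAs (TopologicalSpace { p : Gr 2 m × Gr 2 m × Gr 2 m // GoodTriple p })

/-- The (partial) flag variety of flags of signature `(0,1,2,3,m)` in `ℝ^m`;
for `m = 4` this is the complete flag variety `Flag(ℝ⁴)`. -/
def Flag123 (m : ℕ) : Type :=
  { v : Gr 1 m × Gr 2 m × Gr 3 m // v.1.1 ≤ v.2.1.1 ∧ v.2.1.1 ≤ v.2.2.1 }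

instance (m : ℕ) : TopologicalSpace (Flag123 m) :=
  inferInstanceAs (TopologicalSpace
    { v : Gr 1 m × Gr 2 m × Gr 3 m // v.1.1 ≤ v.2.1.1 ∧ v.2.1.1 ≤ v.2.2.1 })

/-- The complete flag variety `Flag(ℝ³)`. -/
def FlagR3 : Type := { v : Gr 1 3 × Gr 2 3 // v.1.1 ≤ v.2.1 }

instance : TopologicalSpace FlagR3 :=
  inferInstanceAs (TopologicalSpace { v : Gr 1 3 × Gr 2 3 // v.1.1 ≤ v.2.1 })

/-- The kernel of the linear functional `rᵢ(A) : ℝ^m → ℝ`, `x ↦ ∑ⱼ A i j * x j`,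
given by the `i`-th row of `A`. -/
def rowKer {m : ℕ} (A : Matrix (Fin m) (Fin m) ℝ) (i : Fin m) : Submodule ℝ (Euc m) :=
  LinearMap.ker ((∑ j : Fin m, A i j • (EuclideanSpace.proj j : Euc m →L[ℝ] ℝ) :
    Euc m →L[ℝ] ℝ) : Euc m →ₗ[ℝ] ℝ)

/-- The span of the first `k` columns of a matrix `A`, as a subspace of `ℝ^m`. -/
def colSpan {m : ℕ} (A : Matrix (Fin m) (Fin m) ℝ) (k : ℕ) : Submodule ℝ (Euc m) :=
  Submodule.span ℝ
    ((fun j : Fin m => (EuclideanSpace.equiv (Fin m) ℝ).symm (fun i => A i j)) ''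
      { j : Fin m | (j : ℕ) < k })

/-- The product of diagonal matrices is diagonal. -/
theorem isDiag_mul' {n : ℕ} {A B : Matrix (Fin n) (Fin n) ℝ}
    (hA : A.IsDiag) (hB : B.IsDiag) : (A * B).IsDiag := by
  intro i j hij
  rw [Matrix.mul_apply]
  refine Finset.sum_eq_zero fun k _ => ?_
  rcases eq_or_ne i k with rfl | hk
  · rw [hB hij, mul_zero]
  · rw [hA hk, zero_mul]

/-- The subgroup `T` of `GL(n,ℝ)` consisting of invertible diagonal matrices. -/
def diagGL (n : ℕ) : Subgroup (Matrix.GeneralLinearGroup (Fin n) ℝ) where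
  carrier := { A | (A : Matrix (Fin n) (Fin n) ℝ).IsDiag }
  one_mem' := Matrix.isDiag_one
  mul_mem' := fun ha hb => isDiag_mul' ha hb
  inv_mem' := by
    intro A hA
    show ((A⁻¹ : Matrix.GeneralLinearGroup (Fin n) ℝ) : Matrix (Fin n) (Fin n) ℝ).IsDiag
    rw [Matrix.coe_units_inv, ← Matrix.IsDiag.diagonal_diag hA, Matrix.inv_diagonal]
    exact Matrix.isDiag_diagonal _

/-- The orthogonal group `O(n)` of `n × n` real orthogonal matrices. -/
abbrev Orth (n : ℕ) := Matrix.orthogonalGroup (Fin n) ℝ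

/-- The subgroup `T ∩ O(n)` of diagonal orthogonal matrices (diagonal entries `±1`). -/
def diagOrth (n : ℕ) : Subgroup ↥(Orth n) where
  carrier := { A | (A : Matrix (Fin n) (Fin n) ℝ).IsDiag }
  one_mem' := Matrix.isDiag_one
  mul_mem' := fun ha hb => isDiag_mul' ha hb
  inv_mem' := by
    intro A hA
    show ((A⁻¹ : ↥(Orth n)) : Matrix (Fin n) (Fin n) ℝ).IsDiag
    rw [Matrix.UnitaryGroup.inv_val, Matrix.star_eq_conjTranspose]
    exact hA.conjTranspose

/-- `SO(n)`, as the subgroup of `O(n)` of matrices of determinant `1`. -/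
def SOsub (n : ℕ) : Subgroup ↥(Orth n) where
  carrier := { A | (A : Matrix (Fin n) (Fin n) ℝ).det = 1 }
  one_mem' := by simp
  mul_mem' := by
    intro a b ha hb
    show ((a * b : ↥(Orth n)) : Matrix (Fin n) (Fin n) ℝ).det = 1
    rw [Matrix.UnitaryGroup.mul_val, Matrix.det_mul, ha, hb, mul_one]
  inv_mem' := by
    intro A hA
    show ((A⁻¹ : ↥(Orth n)) : Matrix (Fin n) (Fin n) ℝ).det = 1
    rw [Matrix.UnitaryGroup.inv_val, Matrix.star_eq_conjTranspose, Matrix.det_conjTranspose]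
    simpa using congrArg star hA

/-- The group `SO(n)` of `n × n` real orthogonal matrices of determinant `1`. -/
abbrev SO (n : ℕ) := ↥(SOsub n)

/-- The underlying matrix of an element of `SO(n)`. -/
def soMat {n : ℕ} (A : SO n) : Matrix (Fin n) (Fin n) ℝ :=
  ((A : ↥(Orth n)) : Matrix (Fin n) (Fin n) ℝ)

/-- The subgroup `Kₙ` of `SO(n)` of diagonal matrices
(entries `±1`, determinant `1`). -/
def Kdiag (n : ℕ) : Subgroup (SO n) where
  carrier := { A | (soMat A).IsDiag }
  one_mem' := Matrix.isDiag_one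
  mul_mem' := fun ha hb => isDiag_mul' ha hb
  inv_mem' := by
    intro A hA
    show (soMat A⁻¹).IsDiag
    have h : soMat A⁻¹ = star (soMat A) := rfl
    rw [h, Matrix.star_eq_conjTranspose]
    exact hA.conjTranspose

/-- The Borel subgroup `Bₙ` of `GL(n,ℝ)` of invertible upper-triangular matrices. -/
def upperB (n : ℕ) : Subgroup (Matrix.GeneralLinearGroup (Fin n) ℝ) where
  carrier := { A | (A : Matrix (Fin n) (Fin n) ℝ).BlockTriangular id }
  one_mem' := Matrix.blockTriangular_one
  mul_mem' := fun ha hb => ha.mul hb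
  inv_mem' := by
    intro A hA
    show ((A⁻¹ : Matrix.GeneralLinearGroup (Fin n) ℝ) :
      Matrix (Fin n) (Fin n) ℝ).BlockTriangular id
    rw [Matrix.coe_units_inv]
    haveI := A.invertible
    exact Matrix.blockTriangular_inv_of_blockTriangular hA

/-- The singular chain complex of a topological space: the free simplicial abelian group
on the singular simplicial set, made into a chain complex via alternating face maps. -/
def singularChainComplex (X : Type) [TopologicalSpace X] : ChainComplex AddCommGrpCat ℕ :=
  (AlgebraicTopology.alternatingFaceMapComplex AddCommGrpCat).obj
    (((CategoryTheory.SimplicialObject.whiskering _ _).obj AddCommGrpCat.free).obj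
      (TopCat.toSSet.obj (TopCat.of X)))

/-- The `k`-th integral singular homology group of a topological space. -/
def singularHomology (X : Type) [TopologicalSpace X] (k : ℕ) : AddCommGrpCat :=
  (singularChainComplex X).homology k




section Infra
open Submodule Set Finset

noncomputable def pOp {m : ℕ} (V : Submodule ℝ (Euc m)) : Euc m →L[ℝ] Euc m :=
  V.subtypeL.comp V.orthogonalProjectionOnto

lemma pOp_apply_mem {m : ℕ} (V : Submodule ℝ (Euc m)) (x : Euc m) : pOp V x ∈ V :=
  (V.orthogonalProjectionOnto x).2

lemma pOp_apply_of_mem {m : ℕ} {V : Submodule ℝ (Euc m)} {x : Euc m} (h : x ∈ V) :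
    pOp V x = x := Submodule.starProjection_eq_self_iff.2 h

lemma sub_pOp_mem_orthogonal {m : ℕ} (V : Submodule ℝ (Euc m)) (x : Euc m) :
    x - pOp V x ∈ Vᗮ := Submodule.sub_starProjection_mem_orthogonal (K := V) x

lemma pOp_unique {m : ℕ} {V : Submodule ℝ (Euc m)} (T : Euc m →L[ℝ] Euc m)
    (hmem : ∀ x, T x ∈ V)
    (horth : ∀ x, ∀ v ∈ V, inner ℝ (x - T x) v = (0 : ℝ)) :
    pOp V = T :=
  ContinuousLinearMap.ext fun x =>
    Submodule.eq_starProjection_of_mem_of_inner_eq_zero (hmem x) (horth x)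

lemma pOp_orthogonal {m : ℕ} (V : Submodule ℝ (Euc m)) : pOp Vᗮ = 1 - pOp V := by
  refine pOp_unique _ (fun x => ?_) (fun x v hv => ?_)
  · simpa using sub_pOp_mem_orthogonal V x
  · have hx : x - (1 - pOp V) x = pOp V x := by
      simp only [ContinuousLinearMap.sub_apply, ContinuousLinearMap.one_apply, sub_sub_cancel]
    rw [hx]
    exact (Submodule.mem_orthogonal V v).1 hv _ (pOp_apply_mem V x)

lemma pOp_sup_of_orthogonal {m : ℕ} {V W : Submodule ℝ (Euc m)}
    (h : ∀ v ∈ V, ∀ w ∈ W, inner ℝ v w = (0 : ℝ)) :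
    pOp (V ⊔ W) = pOp V + pOp W := by
  refine pOp_unique _ (fun x => ?_) (fun x u hu => ?_)
  · exact Submodule.add_mem_sup (pOp_apply_mem V x) (pOp_apply_mem W x)
  · obtain ⟨v, hv, w, hw, rfl⟩ := Submodule.mem_sup.1 hu
    have h1 : inner ℝ (x - pOp V x) v = (0:ℝ) :=
      (Submodule.mem_orthogonal' V _).1 (sub_pOp_mem_orthogonal V x) v hv
    have h2 : inner ℝ (x - pOp W x) w = (0:ℝ) :=
      (Submodule.mem_orthogonal' W _).1 (sub_pOp_mem_orthogonal W x) w hw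
    have h3 : inner ℝ (pOp W x) v = (0:ℝ) := by
      rw [real_inner_comm]; exact h v hv _ (pOp_apply_mem W x)
    have h4 : inner ℝ (pOp V x) w = (0:ℝ) := h _ (pOp_apply_mem V x) _ hw
    have e1 : x - (pOp V + pOp W) x = x - pOp V x - pOp W x := by
      simp only [ContinuousLinearMap.add_apply]; abel
    have hvterm : inner ℝ (x - pOp V x - pOp W x) v = (0:ℝ) := by
      rw [show x - pOp V x - pOp W x = (x - pOp V x) - pOp W x from rfl, inner_sub_left, h1, h3]
      ring
    have hwterm : inner ℝ (x - pOp V x - pOp W x) w = (0:ℝ) := by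
      have e2 : x - pOp V x - pOp W x = (x - pOp W x) - pOp V x := by abel
      rw [e2, inner_sub_left, h2, h4]; ring
    rw [e1, inner_add_right, hvterm, hwterm]; ring

lemma pOp_sup_of_le_orthogonal {m : ℕ} {V W : Submodule ℝ (Euc m)} (h : W ≤ Vᗮ) :
    pOp (V ⊔ W) = pOp V + pOp W :=
  pOp_sup_of_orthogonal fun v hv w hw => (Submodule.mem_orthogonal V w).1 (h hw) v hv

/-- orthogonal decomposition of `W` along `V ≤ W`. -/
lemma pOp_inf_orthogonal_of_le {m : ℕ} {V W : Submodule ℝ (Euc m)} (h : V ≤ W) :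
    pOp (Vᗮ ⊓ W) = pOp W - pOp V := by
  have hsup : V ⊔ Vᗮ ⊓ W = W := Submodule.sup_orthogonal_inf_of_hasOrthogonalProjection h
  have := pOp_sup_of_le_orthogonal (V := V) (W := Vᗮ ⊓ W) inf_le_left
  rw [hsup] at this
  rw [this]; abel

/-- the rank-one operator `x ↦ ⟪u,x⟫ • w`. -/
def rk1 {m : ℕ} (u w : Euc m) : Euc m →L[ℝ] Euc m :=
  (innerSL ℝ u).smulRight w

lemma rk1_apply {m : ℕ} (u w x : Euc m) : rk1 u w x = (inner ℝ u x : ℝ) • w := rfl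

lemma continuous_rk1 {X : Type*} [TopologicalSpace X] {m : ℕ} {u w : X → Euc m}
    (hu : Continuous u) (hw : Continuous w) : Continuous fun x => rk1 (u x) (w x) := by
  have h1 : Continuous fun x => (innerSL ℝ (u x) : Euc m →L[ℝ] ℝ) :=
    (innerSL ℝ (E := Euc m)).continuous.comp hu
  exact (ContinuousLinearMap.smulRightL ℝ (Euc m) (Euc m)).continuous₂.comp (h1.prodMk hw)

lemma pOp_span_orthonormal {m r : ℕ} {e : Fin r → Euc m} (he : Orthonormal ℝ e) :
    pOp (span ℝ (range e)) = ∑ i, rk1 (e i) (e i) := by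
  refine pOp_unique _ (fun x => ?_) (fun x v hv => ?_)
  · rw [ContinuousLinearMap.sum_apply]
    exact Submodule.sum_mem _ fun i _ =>
      Submodule.smul_mem _ _ (subset_span (mem_range_self i))
  · refine Submodule.span_induction (p := fun v _ => inner ℝ (x - (∑ i, rk1 (e i) (e i)) x) v = (0:ℝ))
      ?_ ?_ ?_ ?_ hv
    · rintro v ⟨j, rfl⟩
      rw [inner_sub_left, ContinuousLinearMap.sum_apply, sum_inner]
      have key : ∀ i ∈ Finset.univ, (inner ℝ (rk1 (e i) (e i) x) (e j) : ℝ) =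
          if i = j then (inner ℝ x (e j) : ℝ) else 0 := by
        intro i _
        rw [rk1_apply, real_inner_smul_left]
        rcases eq_or_ne i j with rfl | hij
        · have h1 : (inner ℝ (e i) (e i) : ℝ) = 1 := by
            rw [real_inner_self_eq_norm_sq, he.1 i]; norm_num
          rw [h1, mul_one, if_pos rfl, real_inner_comm]
        · rw [he.2 hij, mul_zero, if_neg hij]
      rw [Finset.sum_congr rfl key, Finset.sum_ite_eq' Finset.univ j]
      simp
    · simp
    · intro a b _ _ ha hb; rw [inner_add_right, ha, hb]; ring
    · intro c a _ ha; rw [inner_smul_right, ha]; ring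

instance finWF' (r : ℕ) : WellFoundedLT (Fin r) := inferInstance

section GS
open InnerProductSpace
variable {X : Type*} [TopologicalSpace X] {m r : ℕ} {U : Set X}

lemma continuousOn_gramSchmidt {v : X → Fin (r+1) → Euc m}
    (hv : ∀ x ∈ U, LinearIndependent ℝ (v x))
    (hc : ∀ i, ContinuousOn (fun x => v x i) U) :
    ∀ i, ContinuousOn (fun x => gramSchmidt ℝ (v x) i) U := by
  suffices h : ∀ n : ℕ, ∀ i : Fin (r+1), (i : ℕ) = n →
      ContinuousOn (fun x => gramSchmidt ℝ (v x) i) U from fun i => h i i rfl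
  intro n
  induction n using Nat.strong_induction_on with
  | _ n ih =>
    rintro i rfl
    have hdef : ∀ x, gramSchmidt ℝ (v x) i =
        v x i - ∑ j ∈ Finset.Iio i,
          ((inner ℝ (gramSchmidt ℝ (v x) j) (v x i) : ℝ) /
              (RCLike.ofReal (K := ℝ) ‖gramSchmidt ℝ (v x) j‖) ^ 2) •
            gramSchmidt ℝ (v x) j := by
      intro x
      rw [eq_sub_iff_add_eq, ← gramSchmidt_def'' ℝ (v x) i]
    simp only [hdef]
    apply ContinuousOn.sub (hc i)
    apply continuousOn_finset_sum
    intro j hj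
    have hjlt : j < i := Finset.mem_Iio.1 hj
    have hgs : ContinuousOn (fun x => gramSchmidt ℝ (v x) j) U := ih j hjlt j rfl
    have hne : ∀ x ∈ U, gramSchmidt ℝ (v x) j ≠ 0 := fun x hx =>
      gramSchmidt_ne_zero _ (hv x hx)
    apply ContinuousOn.fun_smul _ hgs
    apply ContinuousOn.div
    · exact ContinuousOn.inner hgs (hc i)
    · exact ((RCLike.continuous_ofReal (K := ℝ)).comp_continuousOn hgs.norm).pow 2
    · intro x hx
      simp only [ne_eq, pow_eq_zero_iff, OfNat.ofNat_ne_zero, not_false_eq_true]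
      intro hz
      exact hne x hx (by simpa [norm_eq_zero] using congrArg id hz)

lemma continuousOn_gramSchmidtNormed {v : X → Fin (r+1) → Euc m}
    (hv : ∀ x ∈ U, LinearIndependent ℝ (v x))
    (hc : ∀ i, ContinuousOn (fun x => v x i) U) :
    ∀ i, ContinuousOn (fun x => gramSchmidtNormed ℝ (v x) i) U := by
  intro i
  have hgs := continuousOn_gramSchmidt hv hc i
  have hne : ∀ x ∈ U, gramSchmidt ℝ (v x) i ≠ 0 := fun x hx =>
    gramSchmidt_ne_zero _ (hv x hx)
  simp only [gramSchmidtNormed]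
  exact ContinuousOn.smul
    (ContinuousOn.inv₀ (hgs.norm) (fun x hx => norm_ne_zero_iff.2 (hne x hx))) hgs

/-- MAIN: continuity of the orthogonal projection field given local spanning families. -/
lemma continuous_pOp_of_locSpan {V : X → Submodule ℝ (Euc m)}
    (hloc : ∀ x₀ : X, ∃ U ∈ nhds x₀, ∃ v : X → Fin (r+1) → Euc m,
      (∀ i, ContinuousOn (fun x => v x i) U) ∧
      (∀ x ∈ U, LinearIndependent ℝ (v x) ∧ span ℝ (range (v x)) = V x)) :
    Continuous fun x => pOp (V x) := by
  rw [continuous_iff_continuousAt]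
  intro x₀
  obtain ⟨U, hU, v, hcv, hgood⟩ := hloc x₀
  set e : X → Fin (r+1) → Euc m := fun x => gramSchmidtNormed ℝ (v x) with he
  have hck : ContinuousOn (fun x => ∑ i, rk1 (e x i) (e x i)) U := by
    apply continuousOn_finset_sum
    intro i _
    have hce := continuousOn_gramSchmidtNormed (fun x hx => (hgood x hx).1) hcv i
    exact (continuous_rk1 (continuous_id : Continuous fun p : Euc m => p) continuous_id).comp_continuousOn hce
  have heq : ∀ x ∈ U, pOp (V x) = ∑ i, rk1 (e x i) (e x i) := by
    intro x hx
    have hind := (hgood x hx).1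
    have hortho : Orthonormal ℝ (e x) := gramSchmidtNormed_orthonormal hind
    have hspan : span ℝ (range (e x)) = V x := by
      rw [he]
      rw [span_gramSchmidtNormed_range, span_gramSchmidt]
      exact (hgood x hx).2
    rw [← hspan, pOp_span_orthonormal hortho]
  have : ContinuousOn (fun x => pOp (V x)) U := fun x hx =>
    (hck x hx).congr (fun y hy => (heq y hy)) (heq x hx) |>.mono (le_refl _)
  exact this.continuousAt hU
end GS

section LocBasis
variable {X : Type*} [TopologicalSpace X] {m r : ℕ}

lemma exists_locBasis {V : X → Submodule ℝ (Euc m)}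
    (hc : Continuous fun x => pOp (V x)) (hdim : ∀ x, finrank ℝ (V x) = r + 1) (x₀ : X) :
    ∃ U ∈ nhds x₀, ∃ v : X → Fin (r+1) → Euc m,
      (∀ i, Continuous fun x => v x i) ∧ (∀ x ∈ U, LinearIndependent ℝ (v x)) ∧
      (∀ x i, v x i ∈ V x) ∧ (∀ x ∈ U, span ℝ (range (v x)) = V x) := by
  have b := Module.finBasisOfFinrankEq ℝ (V x₀) (hdim x₀)
  set u : Fin (r+1) → Euc m := fun i => (b i : Euc m) with hu
  set v : X → Fin (r+1) → Euc m := fun x i => pOp (V x) (u i) with hv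
  have hvc : ∀ i, Continuous fun x => v x i := fun i => hc.clm_apply continuous_const
  have hmem : ∀ x, ∀ i, v x i ∈ V x := fun x i => pOp_apply_mem _ _
  have hind0 : LinearIndependent ℝ (v x₀) := by
    have he : v x₀ = u := funext fun i => pOp_apply_of_mem (b i).2
    rw [he, hu]
    exact b.linearIndependent.map' (V x₀).subtype (Submodule.ker_subtype _)
  have hSopen : IsOpen {f : Fin (r+1) → Euc m | LinearIndependent ℝ f} :=
    isOpen_setOf_linearIndependent
  have hvcont : Continuous (fun x => v x) := continuous_pi hvc
  refine ⟨(fun x => v x) ⁻¹' {f | LinearIndependent ℝ f},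
    (hSopen.preimage hvcont).mem_nhds hind0, v, hvc, fun x hx => hx, hmem, ?_⟩
  intro x hx
  apply Submodule.eq_of_le_of_finrank_eq
  · rw [span_le]; rintro _ ⟨i, rfl⟩; exact hmem x i
  · rw [finrank_span_eq_card (hx : LinearIndependent ℝ (v x)), hdim x, Fintype.card_fin]

end LocBasis

section Dim4
variable {X : Type*} [TopologicalSpace X]

lemma finrank_orth (V : Submodule ℝ (Euc 4)) : finrank ℝ Vᗮ = 4 - finrank ℝ V := by
  have h := Submodule.finrank_add_finrank_orthogonal (K := V) (𝕜 := ℝ)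
  rw [finrank_euclideanSpace_fin] at h
  omega

lemma continuous_pOp_sup3 {A B : X → Submodule ℝ (Euc 4)}
    (hA : Continuous fun x => pOp (A x)) (hB : Continuous fun x => pOp (B x))
    (hdA : ∀ x, finrank ℝ (A x) = 2) (hdB : ∀ x, finrank ℝ (B x) = 2)
    (hsup : ∀ x, finrank ℝ (A x ⊔ B x : Submodule ℝ (Euc 4)) = 3) :
    Continuous fun x => pOp (A x ⊔ B x) := by
  apply continuous_pOp_of_locSpan (r := 2)
  intro x₀
  obtain ⟨U₁, hU₁, a, hca, hinda, hmema, hspana⟩ :=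
    exists_locBasis (r := 1) hA (fun x => hdA x) x₀
  obtain ⟨U₂, hU₂, bb, hcb, hindb, hmemb, hspanb⟩ :=
    exists_locBasis (r := 1) hB (fun x => hdB x) x₀
  have hx₀1 : x₀ ∈ U₁ := mem_of_mem_nhds hU₁
  have hx₀2 : x₀ ∈ U₂ := mem_of_mem_nhds hU₂
  have hBnotle : ¬ B x₀ ≤ A x₀ := by
    intro hle
    have h2 := hsup x₀
    rw [sup_eq_left.2 hle, hdA x₀] at h2
    norm_num at h2
  have hexi : ∃ i, bb x₀ i ∉ A x₀ := by
    by_contra h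
    push_neg at h
    apply hBnotle
    rw [← hspanb x₀ hx₀2, span_le]
    rintro _ ⟨i, rfl⟩; exact h i
  obtain ⟨i, hi⟩ := hexi
  set w : X → Fin 3 → Euc 4 := fun x => Fin.cons (bb x i) (fun j => a x j) with hw
  have hcw : ∀ j : Fin 3, Continuous fun x => w x j := by
    intro j
    refine Fin.cases ?_ ?_ j
    · simpa [hw] using (hcb i)
    · intro j; simpa [hw] using (hca j)
  have hmemw : ∀ x, ∀ j : Fin 3, w x j ∈ A x ⊔ B x := by
    intro x j
    refine Fin.cases ?_ ?_ j
    · exact Submodule.mem_sup_right (hmemb x i)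
    · intro j; exact Submodule.mem_sup_left (hmema x j)
  have hind0 : LinearIndependent ℝ (w x₀) := by
    apply LinearIndependent.fin_cons
    · exact hinda x₀ hx₀1
    · rw [show span ℝ (range fun j => a x₀ j) = A x₀ from hspana x₀ hx₀1]
      exact hi
  have hSopen : IsOpen {f : Fin 3 → Euc 4 | LinearIndependent ℝ f} :=
    isOpen_setOf_linearIndependent
  have hwcont : Continuous fun x => w x := continuous_pi hcw
  refine ⟨(fun x => w x) ⁻¹' {f | LinearIndependent ℝ f},
    (hSopen.preimage hwcont).mem_nhds hind0, w,
    fun j => (hcw j).continuousOn, ?_⟩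
  intro x hx
  refine ⟨hx, ?_⟩
  apply Submodule.eq_of_le_of_finrank_eq
  · rw [span_le]; rintro _ ⟨j, rfl⟩; exact hmemw x j
  · rw [finrank_span_eq_card (hx : LinearIndependent ℝ (w x)), hsup x, Fintype.card_fin]

lemma continuous_pOp_inf1 {A B : X → Submodule ℝ (Euc 4)}
    (hA : Continuous fun x => pOp (A x)) (hB : Continuous fun x => pOp (B x))
    (hdA : ∀ x, finrank ℝ (A x) = 2) (hdB : ∀ x, finrank ℝ (B x) = 2)
    (hinf : ∀ x, finrank ℝ (A x ⊓ B x : Submodule ℝ (Euc 4)) = 1) :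
    Continuous fun x => pOp (A x ⊓ B x) := by
  have hAB : ∀ x, A x ⊓ B x = ((A x)ᗮ ⊔ (B x)ᗮ)ᗮ := by
    intro x
    rw [← Submodule.inf_orthogonal, Submodule.orthogonal_orthogonal,
      Submodule.orthogonal_orthogonal]
  have hsupd : ∀ x, finrank ℝ ((A x)ᗮ ⊔ (B x)ᗮ : Submodule ℝ (Euc 4)) = 3 := by
    intro x
    have h1 : finrank ℝ (((A x)ᗮ ⊔ (B x)ᗮ : Submodule ℝ (Euc 4))ᗮ) = 1 := by
      rw [← hAB x]; exact hinf x
    have h2 := finrank_orth ((A x)ᗮ ⊔ (B x)ᗮ : Submodule ℝ (Euc 4))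
    rw [h1] at h2
    have h3 := Submodule.finrank_le ((A x)ᗮ ⊔ (B x)ᗮ : Submodule ℝ (Euc 4))
    rw [finrank_euclideanSpace_fin] at h3
    omega
  have hsup3 := continuous_pOp_sup3 (A := fun x => (A x)ᗮ) (B := fun x => (B x)ᗮ)
    (by simpa only [pOp_orthogonal] using (continuous_const.fun_sub hA : Continuous fun x => (1 : Euc 4 →L[ℝ] Euc 4) - pOp (A x)))
    (by simpa only [pOp_orthogonal] using (continuous_const.fun_sub hB : Continuous fun x => (1 : Euc 4 →L[ℝ] Euc 4) - pOp (B x)))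
    (fun x => by rw [finrank_orth, hdA x]) (fun x => by rw [finrank_orth, hdB x]) hsupd
  have : (fun x => pOp (A x ⊓ B x)) =
      fun x => 1 - pOp ((A x)ᗮ ⊔ (B x)ᗮ : Submodule ℝ (Euc 4)) := by
    funext x
    rw [hAB x, pOp_orthogonal]
  rw [this]
  exact continuous_const.sub hsup3

end Dim4

section Geometry

lemma sub_ne_bot_of_finrank {m : ℕ} {P : Submodule ℝ (Euc m)} {r : ℕ} (h : finrank ℝ P = r + 1) :
    P ≠ ⊥ := by
  intro hb
  rw [hb, finrank_bot] at h
  omega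

lemma lines_inf_bot {m : ℕ} {P Q : Submodule ℝ (Euc m)}
    (hP : finrank ℝ P = 1) (hQ : finrank ℝ Q = 1) (hne : P ≠ Q) : P ⊓ Q = ⊥ := by
  by_contra h
  have h1 : finrank ℝ (P ⊓ Q : Submodule ℝ (Euc m)) ≠ 0 := by
    intro h0
    exact h (Submodule.finrank_eq_zero.1 h0)
  have h2 : finrank ℝ (P ⊓ Q : Submodule ℝ (Euc m)) ≤ 1 := hP ▸ Submodule.finrank_mono inf_le_left
  have h3 : finrank ℝ (P ⊓ Q : Submodule ℝ (Euc m)) = 1 := by omega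
  have e1 : P ⊓ Q = P := Submodule.eq_of_le_of_finrank_eq inf_le_left (by rw [h3, hP])
  have e2 : P ⊓ Q = Q := Submodule.eq_of_le_of_finrank_eq inf_le_right (by rw [h3, hQ])
  exact hne (e1.symm.trans e2)

lemma eq_bot_of_le_le_orthogonal {m : ℕ} {P Q : Submodule ℝ (Euc m)}
    (h1 : P ≤ Q) (h2 : P ≤ Qᗮ) : P = ⊥ :=
  le_bot_iff.1 (Q.inf_orthogonal_eq_bot ▸ le_inf h1 h2)

lemma finrank_map_of_ker {f : Euc 4 →L[ℝ] Euc 4} {V : Submodule ℝ (Euc 4)}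
    (h : ∀ x ∈ V, f x = 0 → x = 0) :
    finrank ℝ (Submodule.map (f : Euc 4 →ₗ[ℝ] Euc 4) V : Submodule ℝ (Euc 4)) = finrank ℝ V := by
  have h1 := LinearMap.finrank_range_add_finrank_ker ((f : Euc 4 →ₗ[ℝ] Euc 4).domRestrict V)
  rw [LinearMap.range_domRestrict] at h1
  have hker : LinearMap.ker ((f : Euc 4 →ₗ[ℝ] Euc 4).domRestrict V) = ⊥ := by
    rw [eq_bot_iff]
    rintro ⟨y, hy⟩ hmem
    have : f y = 0 := hmem
    have := h y hy this
    exact Submodule.mem_bot _ |>.2 (Subtype.ext this)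
  rw [hker, finrank_bot, add_zero] at h1
  rw [← h1]

end Geometry

section TripleGeo
variable {l1 l2 l3 : Submodule ℝ (Euc 4)}
  (d1 : finrank ℝ l1 = 2) (d2 : finrank ℝ l2 = 2) (d3 : finrank ℝ l3 = 2)
  (h12 : finrank ℝ (l1 ⊓ l2 : Submodule ℝ (Euc 4)) = 1)
  (h13 : finrank ℝ (l1 ⊓ l3 : Submodule ℝ (Euc 4)) = 1)
  (h23 : finrank ℝ (l2 ⊓ l3 : Submodule ℝ (Euc 4)) = 1)
  (n12_13 : l1 ⊓ l2 ≠ l1 ⊓ l3)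
  (n12_23 : l1 ⊓ l2 ≠ l2 ⊓ l3)
  (n13_23 : l1 ⊓ l3 ≠ l2 ⊓ l3)

include d1 d3 h13 in
lemma dimV3 : finrank ℝ (l1 ⊔ l3 : Submodule ℝ (Euc 4)) = 3 := by
  have := Submodule.finrank_sup_add_finrank_inf_eq l1 l3
  rw [d1, d3, h13] at this
  omega

include d2 h12 h23 n12_23 in
lemma l2_eq_sup : (l1 ⊓ l2) ⊔ (l2 ⊓ l3) = l2 := by
  apply Submodule.eq_of_le_of_finrank_eq (sup_le inf_le_right inf_le_left)
  have hq : (l1 ⊓ l2) ⊓ (l2 ⊓ l3) = ⊥ := lines_inf_bot h12 h23 n12_23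
  have := Submodule.finrank_sup_add_finrank_inf_eq (l1 ⊓ l2) (l2 ⊓ l3)
  rw [hq, h12, h23, finrank_bot] at this
  rw [d2]
  omega

include d2 h12 h23 n12_23 in
lemma l2_le_V3 : l2 ≤ l1 ⊔ l3 := by
  rw [← l2_eq_sup d2 h12 h23 n12_23]
  exact sup_le (le_trans inf_le_left le_sup_left) (le_trans inf_le_right le_sup_right)

include h12 h13 n12_13 in
lemma V1_inf_l3 : (l1 ⊓ l2) ⊓ l3 = ⊥ := by
  have key : (l1 ⊓ l2) ⊓ l3 ≤ (l1 ⊓ l2) ⊓ (l1 ⊓ l3) := by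
    intro x hx
    obtain ⟨hx12, hx3⟩ := Submodule.mem_inf.1 hx
    obtain ⟨hx1, hx2⟩ := Submodule.mem_inf.1 hx12
    exact Submodule.mem_inf.2 ⟨Submodule.mem_inf.2 ⟨hx1, hx2⟩, Submodule.mem_inf.2 ⟨hx1, hx3⟩⟩
  rw [lines_inf_bot h12 h13 n12_13] at key
  exact le_bot_iff.1 key

/-- the homotopy operator on the `ℓ₂` slot. -/
noncomputable def opA (l1 l2 : Submodule ℝ (Euc 4)) (t : ℝ) : Euc 4 →L[ℝ] Euc 4 :=
  1 - t • (pOp l1 - pOp (l1 ⊓ l2))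

/-- the homotopy operator on the `ℓ₃` slot. -/
noncomputable def opB (l1 l2 : Submodule ℝ (Euc 4)) (t : ℝ) : Euc 4 →L[ℝ] Euc 4 :=
  1 - t • pOp (l1 ⊓ l2)

lemma opA_apply (t : ℝ) (x : Euc 4) :
    opA l1 l2 t x = x - t • (pOp ((l1 ⊓ l2)ᗮ ⊓ l1) x) := by
  rw [pOp_inf_orthogonal_of_le inf_le_left]
  simp [opA, sub_smul, smul_sub]

lemma opB_apply (t : ℝ) (x : Euc 4) :
    opB l1 l2 t x = x - t • pOp (l1 ⊓ l2) x := by simp [opB]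

include h12 h13 n12_13 in
lemma opB_inj (t : ℝ) : ∀ x ∈ l3, opB l1 l2 t x = 0 → x = 0 := by
  intro x hx3 h0
  rw [opB_apply, sub_eq_zero] at h0
  have hxV1 : x ∈ l1 ⊓ l2 := h0 ▸ Submodule.smul_mem _ _ (pOp_apply_mem _ _)
  have hm : x ∈ (l1 ⊓ l2) ⊓ l3 := Submodule.mem_inf.2 ⟨hxV1, hx3⟩
  rw [V1_inf_l3 h12 h13 n12_13] at hm
  exact hm

lemma opA_inj (t : ℝ) : ∀ x ∈ l2, opA l1 l2 t x = 0 → x = 0 := by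
  intro x hx2 h0
  rw [opA_apply, sub_eq_zero] at h0
  set D : Submodule ℝ (Euc 4) := (l1 ⊓ l2)ᗮ ⊓ l1 with hD
  have hxD : x ∈ D := h0 ▸ Submodule.smul_mem _ _ (pOp_apply_mem _ _)
  have hx1 : x ∈ l1 := (Submodule.mem_inf.1 hxD).2
  have hxV1 : x ∈ l1 ⊓ l2 := Submodule.mem_inf.2 ⟨hx1, hx2⟩
  have hm : x ∈ (l1 ⊓ l2) ⊓ (l1 ⊓ l2)ᗮ :=
    Submodule.mem_inf.2 ⟨hxV1, (Submodule.mem_inf.1 hxD).1⟩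
  rw [Submodule.inf_orthogonal_eq_bot] at hm
  exact hm

lemma opA_fix {t : ℝ} {v : Euc 4} (hv : v ∈ l1 ⊓ l2) : opA l1 l2 t v = v := by
  rw [opA_apply]
  have : pOp ((l1 ⊓ l2)ᗮ ⊓ l1) v = pOp l1 v - pOp (l1 ⊓ l2) v := by
    rw [pOp_inf_orthogonal_of_le inf_le_left]; rfl
  rw [this, pOp_apply_of_mem (Submodule.mem_inf.1 hv).1, pOp_apply_of_mem hv, sub_self,
    smul_zero, sub_zero]

include d2 h12 h23 n12_23 in
lemma opA_mem_V3 (t : ℝ) {x : Euc 4} (hx : x ∈ l2) : opA l1 l2 t x ∈ l1 ⊔ l3 := by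
  rw [opA_apply]
  have hxV3 : x ∈ l1 ⊔ l3 := l2_le_V3 d2 h12 h23 n12_23 hx
  have hD : pOp ((l1 ⊓ l2)ᗮ ⊓ l1) x ∈ l1 ⊔ l3 :=
    Submodule.mem_sup_left (Submodule.mem_inf.1 (pOp_apply_mem _ _)).2
  exact Submodule.sub_mem _ hxV3 (Submodule.smul_mem _ _ hD)

lemma opB_mem_V3 (t : ℝ) {x : Euc 4} (hx : x ∈ l3) : opB l1 l2 t x ∈ l1 ⊔ l3 := by
  rw [opB_apply]
  exact Submodule.sub_mem _ (Submodule.mem_sup_right hx)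
    (Submodule.smul_mem _ _ (Submodule.mem_sup_left (Submodule.mem_inf.1 (pOp_apply_mem (l1 ⊓ l2) x)).1))

end TripleGeo

section TripleGeo2
variable {l1 l2 l3 : Submodule ℝ (Euc 4)} {t : ℝ}
  (d1 : finrank ℝ l1 = 2) (d2 : finrank ℝ l2 = 2) (d3 : finrank ℝ l3 = 2)
  (h12 : finrank ℝ (l1 ⊓ l2 : Submodule ℝ (Euc 4)) = 1)
  (h13 : finrank ℝ (l1 ⊓ l3 : Submodule ℝ (Euc 4)) = 1)
  (h23 : finrank ℝ (l2 ⊓ l3 : Submodule ℝ (Euc 4)) = 1)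
  (n12_13 : l1 ⊓ l2 ≠ l1 ⊓ l3)
  (n12_23 : l1 ⊓ l2 ≠ l2 ⊓ l3)
  (n13_23 : l1 ⊓ l3 ≠ l2 ⊓ l3)

include d2 in
lemma dim_l2t : finrank ℝ (Submodule.map (opA l1 l2 t : Euc 4 →ₗ[ℝ] Euc 4) l2 : Submodule ℝ (Euc 4)) = 2 := by
  rw [finrank_map_of_ker (opA_inj t), d2]

include d3 h12 h13 n12_13 in
lemma dim_l3t : finrank ℝ (Submodule.map (opB l1 l2 t : Euc 4 →ₗ[ℝ] Euc 4) l3 : Submodule ℝ (Euc 4)) = 2 := by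
  rw [finrank_map_of_ker (opB_inj h12 h13 n12_13 t), d3]

lemma V1_le_l2t : l1 ⊓ l2 ≤ Submodule.map (opA l1 l2 t : Euc 4 →ₗ[ℝ] Euc 4) l2 := by
  intro v hv
  exact Submodule.mem_map.2 ⟨v, (Submodule.mem_inf.1 hv).2, opA_fix hv⟩

lemma l1_inf_l2t : l1 ⊓ Submodule.map (opA l1 l2 t : Euc 4 →ₗ[ℝ] Euc 4) l2 = l1 ⊓ l2 := by
  apply le_antisymm
  · intro x hx
    obtain ⟨hx1, hx2t⟩ := Submodule.mem_inf.1 hx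
    obtain ⟨y, hy2, hyx⟩ := Submodule.mem_map.1 hx2t
    have hyD : y = x + t • pOp ((l1 ⊓ l2)ᗮ ⊓ l1) y := by
      rw [← hyx, ContinuousLinearMap.coe_coe, opA_apply]; abel
    have hy1 : y ∈ l1 := by
      rw [hyD]
      exact Submodule.add_mem _ hx1
        (Submodule.smul_mem _ _ (Submodule.mem_inf.1 (pOp_apply_mem _ _)).2)
    have hyV1 : y ∈ l1 ⊓ l2 := Submodule.mem_inf.2 ⟨hy1, hy2⟩
    rw [← hyx, ContinuousLinearMap.coe_coe, opA_fix hyV1]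
    exact hyV1
  · exact le_inf inf_le_left V1_le_l2t

include h12 h13 n12_13 in
lemma l3t_inf_V1 : Submodule.map (opB l1 l2 t : Euc 4 →ₗ[ℝ] Euc 4) l3 ⊓ (l1 ⊓ l2) = ⊥ := by
  rw [eq_bot_iff]
  intro x hx
  obtain ⟨hx3t, hxV1⟩ := Submodule.mem_inf.1 hx
  obtain ⟨y, hy3, hyx⟩ := Submodule.mem_map.1 hx3t
  have hyV1 : y ∈ l1 ⊓ l2 := by
    have : y = x + t • pOp (l1 ⊓ l2) y := by rw [← hyx, ContinuousLinearMap.coe_coe, opB_apply]; abel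
    rw [this]
    exact Submodule.add_mem _ hxV1 (Submodule.smul_mem _ _ (pOp_apply_mem _ _))
  have hm : y ∈ (l1 ⊓ l2) ⊓ l3 := Submodule.mem_inf.2 ⟨hyV1, hy3⟩
  rw [V1_inf_l3 h12 h13 n12_13] at hm
  have : y = 0 := hm
  rw [← hyx, this, map_zero]
  exact Submodule.zero_mem _

include d1 d2 d3 h12 h13 h23 n12_13 n12_23 in
lemma dim_l1_inf_l3t :
    finrank ℝ (l1 ⊓ Submodule.map (opB l1 l2 t : Euc 4 →ₗ[ℝ] Euc 4) l3 : Submodule ℝ (Euc 4)) = 1 := by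
  set l3t := Submodule.map (opB l1 l2 t : Euc 4 →ₗ[ℝ] Euc 4) l3 with hl3t
  have hd3t : finrank ℝ l3t = 2 := dim_l3t d3 h12 h13 n12_13
  have hsuple : l1 ⊔ l3t ≤ l1 ⊔ l3 :=
    sup_le le_sup_left (fun x hx => by
      obtain ⟨y, hy3, hyx⟩ := Submodule.mem_map.1 hx
      exact hyx ▸ opB_mem_V3 t hy3)
  have hsup : finrank ℝ (l1 ⊔ l3t : Submodule ℝ (Euc 4)) ≤ 3 :=
    (dimV3 d1 d3 h13) ▸ Submodule.finrank_mono hsuple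
  have heq := Submodule.finrank_sup_add_finrank_inf_eq l1 l3t
  rw [d1, hd3t] at heq
  have hge : 1 ≤ finrank ℝ (l1 ⊓ l3t : Submodule ℝ (Euc 4)) := by omega
  have hle : finrank ℝ (l1 ⊓ l3t : Submodule ℝ (Euc 4)) ≤ 2 :=
    hd3t ▸ Submodule.finrank_mono inf_le_right
  rcases Nat.lt_or_ge (finrank ℝ (l1 ⊓ l3t : Submodule ℝ (Euc 4))) 2 with hlt | hge2
  · omega
  · exfalso
    have h2 : finrank ℝ (l1 ⊓ l3t : Submodule ℝ (Euc 4)) = 2 := by omega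
    have e1 : l1 ⊓ l3t = l3t := Submodule.eq_of_le_of_finrank_eq inf_le_right (by rw [h2, hd3t])
    have e2 : l1 ⊓ l3t = l1 := Submodule.eq_of_le_of_finrank_eq inf_le_left (by rw [h2, d1])
    have hV1le : l1 ⊓ l2 ≤ l3t := by
      rw [← e1, e2]
      exact inf_le_left
    have hbot := l3t_inf_V1 (t := t) h12 h13 n12_13
    rw [← hl3t, inf_eq_right.2 hV1le] at hbot
    exact sub_ne_bot_of_finrank (r := 0) h12 hbot

include d1 d2 d3 h12 h13 h23 n12_13 n12_23 in
lemma dim_l2t_inf_l3t :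
    finrank ℝ (Submodule.map (opA l1 l2 t : Euc 4 →ₗ[ℝ] Euc 4) l2 ⊓ Submodule.map (opB l1 l2 t : Euc 4 →ₗ[ℝ] Euc 4) l3 :
      Submodule ℝ (Euc 4)) = 1 := by
  set l2t := Submodule.map (opA l1 l2 t : Euc 4 →ₗ[ℝ] Euc 4) l2 with hl2t
  set l3t := Submodule.map (opB l1 l2 t : Euc 4 →ₗ[ℝ] Euc 4) l3 with hl3t
  have hd2t : finrank ℝ l2t = 2 := dim_l2t d2
  have hd3t : finrank ℝ l3t = 2 := dim_l3t d3 h12 h13 n12_13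
  have hsuple : l2t ⊔ l3t ≤ l1 ⊔ l3 := by
    apply sup_le
    · intro x hx
      obtain ⟨y, hy2, hyx⟩ := Submodule.mem_map.1 hx
      exact hyx ▸ opA_mem_V3 d2 h12 h23 n12_23 t hy2
    · intro x hx
      obtain ⟨y, hy3, hyx⟩ := Submodule.mem_map.1 hx
      exact hyx ▸ opB_mem_V3 t hy3
  have hsup : finrank ℝ (l2t ⊔ l3t : Submodule ℝ (Euc 4)) ≤ 3 :=
    (dimV3 d1 d3 h13) ▸ Submodule.finrank_mono hsuple
  have heq := Submodule.finrank_sup_add_finrank_inf_eq l2t l3t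
  rw [hd2t, hd3t] at heq
  have hle : finrank ℝ (l2t ⊓ l3t : Submodule ℝ (Euc 4)) ≤ 2 :=
    hd3t ▸ Submodule.finrank_mono inf_le_right
  rcases Nat.lt_or_ge (finrank ℝ (l2t ⊓ l3t : Submodule ℝ (Euc 4))) 2 with hlt | hge2
  · omega
  · exfalso
    have h2 : finrank ℝ (l2t ⊓ l3t : Submodule ℝ (Euc 4)) = 2 := by omega
    have e1 : l2t ⊓ l3t = l3t := Submodule.eq_of_le_of_finrank_eq inf_le_right (by rw [h2, hd3t])
    have e2 : l2t ⊓ l3t = l2t := Submodule.eq_of_le_of_finrank_eq inf_le_left (by rw [h2, hd2t])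
    have hV1le : l1 ⊓ l2 ≤ l3t := by
      rw [← e1, e2]
      exact V1_le_l2t
    have hbot := l3t_inf_V1 (t := t) h12 h13 n12_13
    rw [← hl3t, inf_eq_right.2 hV1le] at hbot
    exact sub_ne_bot_of_finrank (r := 0) h12 hbot

include d1 d2 d3 h12 h13 h23 n12_13 n12_23 in
lemma goodTriple_t :
    finrank ℝ (l1 ⊓ Submodule.map (opA l1 l2 t : Euc 4 →ₗ[ℝ] Euc 4) l2 : Submodule ℝ (Euc 4)) = 1 ∧
    finrank ℝ (l1 ⊓ Submodule.map (opB l1 l2 t : Euc 4 →ₗ[ℝ] Euc 4) l3 : Submodule ℝ (Euc 4)) = 1 ∧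
    finrank ℝ (Submodule.map (opA l1 l2 t : Euc 4 →ₗ[ℝ] Euc 4) l2 ⊓ Submodule.map (opB l1 l2 t : Euc 4 →ₗ[ℝ] Euc 4) l3 :
      Submodule ℝ (Euc 4)) = 1 ∧
    l1 ⊓ Submodule.map (opA l1 l2 t : Euc 4 →ₗ[ℝ] Euc 4) l2 ≠ l1 ⊓ Submodule.map (opB l1 l2 t : Euc 4 →ₗ[ℝ] Euc 4) l3 ∧
    l1 ⊓ Submodule.map (opA l1 l2 t : Euc 4 →ₗ[ℝ] Euc 4) l2 ≠
      Submodule.map (opA l1 l2 t : Euc 4 →ₗ[ℝ] Euc 4) l2 ⊓ Submodule.map (opB l1 l2 t : Euc 4 →ₗ[ℝ] Euc 4) l3 ∧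
    l1 ⊓ Submodule.map (opB l1 l2 t : Euc 4 →ₗ[ℝ] Euc 4) l3 ≠
      Submodule.map (opA l1 l2 t : Euc 4 →ₗ[ℝ] Euc 4) l2 ⊓ Submodule.map (opB l1 l2 t : Euc 4 →ₗ[ℝ] Euc 4) l3 := by
  set l2t := Submodule.map (opA l1 l2 t : Euc 4 →ₗ[ℝ] Euc 4) l2 with hl2t
  set l3t := Submodule.map (opB l1 l2 t : Euc 4 →ₗ[ℝ] Euc 4) l3 with hl3t
  have e12 : l1 ⊓ l2t = l1 ⊓ l2 := l1_inf_l2t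
  have hV1ne : (l1 ⊓ l2 : Submodule ℝ (Euc 4)) ≠ ⊥ := sub_ne_bot_of_finrank (r := 0) h12
  have hbot := l3t_inf_V1 (t := t) h12 h13 n12_13
  have hne1 : l1 ⊓ l2t ≠ l1 ⊓ l3t := by
    rw [e12]
    intro h
    have hle : l1 ⊓ l2 ≤ l3t := h ▸ inf_le_right
    rw [← hl3t, inf_eq_right.2 hle] at hbot
    exact hV1ne hbot
  have hne2 : l1 ⊓ l2t ≠ l2t ⊓ l3t := by
    rw [e12]
    intro h
    have hle : l1 ⊓ l2 ≤ l3t := h ▸ inf_le_right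
    rw [← hl3t, inf_eq_right.2 hle] at hbot
    exact hV1ne hbot
  have hne3 : l1 ⊓ l3t ≠ l2t ⊓ l3t := by
    intro h
    have hq2t : l1 ⊓ l3t ≤ l2t := h ▸ inf_le_left
    have hqV1 : l1 ⊓ l3t ≤ l1 ⊓ l2 := by
      rw [← e12]
      exact le_inf inf_le_left hq2t
    have hqbot : l1 ⊓ l3t ≤ l3t ⊓ (l1 ⊓ l2) := le_inf inf_le_right hqV1
    rw [hbot] at hqbot
    have : (l1 ⊓ l3t : Submodule ℝ (Euc 4)) = ⊥ := le_bot_iff.1 hqbot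
    exact sub_ne_bot_of_finrank (r := 0)
      (dim_l1_inf_l3t d1 d2 d3 h12 h13 h23 n12_13 n12_23) this
  refine ⟨by rw [e12]; exact h12,
    dim_l1_inf_l3t d1 d2 d3 h12 h13 h23 n12_13 n12_23,
    dim_l2t_inf_l3t d1 d2 d3 h12 h13 h23 n12_13 n12_23, hne1, hne2, hne3⟩

end TripleGeo2

section Endpoints
variable {l1 l2 l3 : Submodule ℝ (Euc 4)}
  (d1 : finrank ℝ l1 = 2) (d2 : finrank ℝ l2 = 2) (d3 : finrank ℝ l3 = 2)
  (h12 : finrank ℝ (l1 ⊓ l2 : Submodule ℝ (Euc 4)) = 1)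
  (h13 : finrank ℝ (l1 ⊓ l3 : Submodule ℝ (Euc 4)) = 1)
  (h23 : finrank ℝ (l2 ⊓ l3 : Submodule ℝ (Euc 4)) = 1)
  (n12_13 : l1 ⊓ l2 ≠ l1 ⊓ l3)
  (n12_23 : l1 ⊓ l2 ≠ l2 ⊓ l3)

lemma opA_zero : Submodule.map (opA l1 l2 0 : Euc 4 →ₗ[ℝ] Euc 4) l2 = l2 := by
  have h0 : ∀ x : Euc 4, opA l1 l2 0 x = x := by
    intro x; rw [opA_apply, zero_smul, sub_zero]
  apply le_antisymm
  · rintro x hx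
    obtain ⟨y, hy, hyx⟩ := Submodule.mem_map.1 hx
    rwa [← hyx, ContinuousLinearMap.coe_coe, h0]
  · intro x hx
    exact Submodule.mem_map.2 ⟨x, hx, h0 x⟩

lemma opB_zero : Submodule.map (opB l1 l2 0 : Euc 4 →ₗ[ℝ] Euc 4) l3 = l3 := by
  have h0 : ∀ x : Euc 4, opB l1 l2 0 x = x := by
    intro x; rw [opB_apply, zero_smul, sub_zero]
  apply le_antisymm
  · rintro x hx
    obtain ⟨y, hy, hyx⟩ := Submodule.mem_map.1 hx
    rwa [← hyx, ContinuousLinearMap.coe_coe, h0]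
  · intro x hx
    exact Submodule.mem_map.2 ⟨x, hx, h0 x⟩

-- dimension facts for flags
include d1 d3 h13 in
lemma dim_L_of_V3 : finrank ℝ (l1ᗮ ⊓ (l1 ⊔ l3) : Submodule ℝ (Euc 4)) = 1 := by
  have hsup : l1 ⊔ (l1ᗮ ⊓ (l1 ⊔ l3)) = l1 ⊔ l3 :=
    Submodule.sup_orthogonal_inf_of_hasOrthogonalProjection le_sup_left
  have hinf : l1 ⊓ (l1ᗮ ⊓ (l1 ⊔ l3)) = ⊥ := by
    rw [eq_bot_iff]
    intro x hx
    obtain ⟨hx1, hx2, _⟩ := Submodule.mem_inf.1 hx |>.imp id Submodule.mem_inf.1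
    have : x ∈ l1 ⊓ l1ᗮ := Submodule.mem_inf.2 ⟨hx1, hx2⟩
    rwa [Submodule.inf_orthogonal_eq_bot] at this
  have heq := Submodule.finrank_sup_add_finrank_inf_eq l1 (l1ᗮ ⊓ (l1 ⊔ l3))
  rw [hsup, hinf, dimV3 d1 d3 h13, d1, finrank_bot] at heq
  omega

include h12 in
lemma dim_V1_sup_L :
    finrank ℝ ((l1 ⊓ l2) ⊔ (l1ᗮ ⊓ (l1 ⊔ l3)) : Submodule ℝ (Euc 4)) =
      1 + finrank ℝ (l1ᗮ ⊓ (l1 ⊔ l3) : Submodule ℝ (Euc 4)) := by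
  have hinf : (l1 ⊓ l2) ⊓ (l1ᗮ ⊓ (l1 ⊔ l3)) = ⊥ := by
    rw [eq_bot_iff]
    intro x hx
    obtain ⟨hxa, hxb⟩ := Submodule.mem_inf.1 hx
    have : x ∈ l1 ⊓ l1ᗮ :=
      Submodule.mem_inf.2 ⟨(Submodule.mem_inf.1 hxa).1, (Submodule.mem_inf.1 hxb).1⟩
    rwa [Submodule.inf_orthogonal_eq_bot] at this
  have heq := Submodule.finrank_sup_add_finrank_inf_eq (l1 ⊓ l2) (l1ᗮ ⊓ (l1 ⊔ l3))
  rw [hinf, h12, finrank_bot] at heq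
  omega

include d1 d2 d3 h12 h13 h23 n12_23 in
lemma opA_one :
    Submodule.map (opA l1 l2 1 : Euc 4 →ₗ[ℝ] Euc 4) l2 = (l1 ⊓ l2) ⊔ (l1ᗮ ⊓ (l1 ⊔ l3)) := by
  have hL : pOp (l1ᗮ ⊓ (l1 ⊔ l3)) = pOp (l1 ⊔ l3) - pOp l1 :=
    pOp_inf_orthogonal_of_le le_sup_left
  apply Submodule.eq_of_le_of_finrank_eq
  · intro x hx
    obtain ⟨y, hy2, hyx⟩ := Submodule.mem_map.1 hx
    have hyV3 : y ∈ l1 ⊔ l3 := l2_le_V3 d2 h12 h23 n12_23 hy2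
    have hyD : pOp ((l1 ⊓ l2)ᗮ ⊓ l1) y = pOp l1 y - pOp (l1 ⊓ l2) y := by
      rw [pOp_inf_orthogonal_of_le inf_le_left]; rfl
    have hform : opA l1 l2 1 y = pOp (l1 ⊓ l2) y + pOp (l1ᗮ ⊓ (l1 ⊔ l3)) y := by
      rw [opA_apply, one_smul, hyD, hL]
      have : pOp (l1 ⊔ l3) y = y := pOp_apply_of_mem hyV3
      simp only [ContinuousLinearMap.sub_apply, this]
      abel
    rw [← hyx, ContinuousLinearMap.coe_coe, hform]
    exact Submodule.add_mem_sup (pOp_apply_mem _ _) (pOp_apply_mem _ _)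
  · rw [dim_l2t d2, dim_V1_sup_L h12, dim_L_of_V3 d1 d3 h13]

include d1 d3 h12 h13 n12_13 in
lemma dim_V1perp_V3 :
    finrank ℝ ((l1 ⊓ l2)ᗮ ⊓ (l1 ⊔ l3) : Submodule ℝ (Euc 4)) = 2 := by
  have hV1le : l1 ⊓ l2 ≤ l1 ⊔ l3 := le_trans inf_le_left le_sup_left
  have hsup : (l1 ⊓ l2) ⊔ ((l1 ⊓ l2)ᗮ ⊓ (l1 ⊔ l3)) = l1 ⊔ l3 :=
    Submodule.sup_orthogonal_inf_of_hasOrthogonalProjection hV1le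
  have hinf : (l1 ⊓ l2) ⊓ ((l1 ⊓ l2)ᗮ ⊓ (l1 ⊔ l3)) = ⊥ := by
    rw [eq_bot_iff]
    intro x hx
    obtain ⟨hxa, hxb⟩ := Submodule.mem_inf.1 hx
    have : x ∈ (l1 ⊓ l2) ⊓ (l1 ⊓ l2)ᗮ :=
      Submodule.mem_inf.2 ⟨hxa, (Submodule.mem_inf.1 hxb).1⟩
    rwa [Submodule.inf_orthogonal_eq_bot] at this
  have heq := Submodule.finrank_sup_add_finrank_inf_eq (l1 ⊓ l2) ((l1 ⊓ l2)ᗮ ⊓ (l1 ⊔ l3))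
  rw [hsup, hinf, dimV3 d1 d3 h13, h12, finrank_bot] at heq
  omega

include d1 d2 d3 h12 h13 h23 n12_13 in
lemma opB_one :
    Submodule.map (opB l1 l2 1 : Euc 4 →ₗ[ℝ] Euc 4) l3 = (l1 ⊓ l2)ᗮ ⊓ (l1 ⊔ l3) := by
  apply Submodule.eq_of_le_of_finrank_eq
  · intro x hx
    obtain ⟨y, hy3, hyx⟩ := Submodule.mem_map.1 hx
    have h1 : opB l1 l2 1 y ∈ (l1 ⊓ l2)ᗮ := by
      rw [opB_apply, one_smul]
      exact sub_pOp_mem_orthogonal _ _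
    have h2 : opB l1 l2 1 y ∈ l1 ⊔ l3 := opB_mem_V3 1 hy3
    rw [← hyx]
    exact Submodule.mem_inf.2 ⟨h1, h2⟩
  · rw [dim_l3t d3 h12 h13 n12_13, dim_V1perp_V3 d1 d3 h12 h13 n12_13]

end Endpoints

section FlagGeo
variable {V1 V2 V3 : Submodule ℝ (Euc 4)}
  (e1 : finrank ℝ V1 = 1) (e2 : finrank ℝ V2 = 2) (e3 : finrank ℝ V3 = 3)
  (le12 : V1 ≤ V2) (le23 : V2 ≤ V3)

-- dimension of a relative orthogonal complement
lemma dim_rel_orth {P Q : Submodule ℝ (Euc 4)} (h : P ≤ Q) :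
    finrank ℝ (Pᗮ ⊓ Q : Submodule ℝ (Euc 4)) = finrank ℝ Q - finrank ℝ P := by
  have hsup : P ⊔ (Pᗮ ⊓ Q) = Q := Submodule.sup_orthogonal_inf_of_hasOrthogonalProjection h
  have hinf : P ⊓ (Pᗮ ⊓ Q) = ⊥ := by
    rw [eq_bot_iff]
    intro x hx
    obtain ⟨hxa, hxb⟩ := Submodule.mem_inf.1 hx
    have : x ∈ P ⊓ Pᗮ := Submodule.mem_inf.2 ⟨hxa, (Submodule.mem_inf.1 hxb).1⟩
    rwa [Submodule.inf_orthogonal_eq_bot] at this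
  have heq := Submodule.finrank_sup_add_finrank_inf_eq P (Pᗮ ⊓ Q)
  rw [hsup, hinf, finrank_bot] at heq
  have := Submodule.finrank_mono h
  omega

include e2 e3 le23 in
lemma dim_Lq : finrank ℝ (V2ᗮ ⊓ V3 : Submodule ℝ (Euc 4)) = 1 := by
  rw [dim_rel_orth le23, e2, e3]

include e1 e3 le12 le23 in
lemma dim_l3' : finrank ℝ (V1ᗮ ⊓ V3 : Submodule ℝ (Euc 4)) = 2 := by
  rw [dim_rel_orth (le_trans le12 le23), e1, e3]

include le12 in
lemma Lq_le_V1perp : V2ᗮ ⊓ V3 ≤ V1ᗮ :=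
  le_trans inf_le_left (Submodule.orthogonal_le le12)

include e1 e2 e3 le12 le23 in
lemma dim_l2' : finrank ℝ (V1 ⊔ (V2ᗮ ⊓ V3) : Submodule ℝ (Euc 4)) = 2 := by
  have hinf : V1 ⊓ (V2ᗮ ⊓ V3) = ⊥ := by
    rw [eq_bot_iff]
    intro x hx
    obtain ⟨hxa, hxb⟩ := Submodule.mem_inf.1 hx
    have : x ∈ V1 ⊓ V1ᗮ := Submodule.mem_inf.2 ⟨hxa, Lq_le_V1perp le12 hxb⟩
    rwa [Submodule.inf_orthogonal_eq_bot] at this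
  have heq := Submodule.finrank_sup_add_finrank_inf_eq V1 (V2ᗮ ⊓ V3)
  rw [hinf, finrank_bot, e1, dim_Lq e2 e3 le23] at heq
  omega

include le12 in
lemma g12 : V2 ⊓ (V1 ⊔ (V2ᗮ ⊓ V3)) = V1 := by
  apply le_antisymm
  · intro x hx
    obtain ⟨hx2, hxs⟩ := Submodule.mem_inf.1 hx
    obtain ⟨a, ha, c, hc, hacx⟩ := Submodule.mem_sup.1 hxs
    have hc2 : c ∈ V2 := by
      have : c = x - a := by rw [← hacx]; abel
      rw [this]
      exact Submodule.sub_mem _ hx2 (le12 ha)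
    have : c ∈ V2 ⊓ V2ᗮ := Submodule.mem_inf.2 ⟨hc2, (Submodule.mem_inf.1 hc).1⟩
    rw [Submodule.inf_orthogonal_eq_bot] at this
    have hc0 : c = 0 := this
    rw [← hacx, hc0, add_zero]
    exact ha
  · exact le_inf le12 le_sup_left

include le23 in
lemma g13 : V2 ⊓ (V1ᗮ ⊓ V3) = V1ᗮ ⊓ V2 := by
  apply le_antisymm
  · intro x hx
    obtain ⟨hx2, hx13⟩ := Submodule.mem_inf.1 hx
    exact Submodule.mem_inf.2 ⟨(Submodule.mem_inf.1 hx13).1, hx2⟩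
  · intro x hx
    obtain ⟨hxp, hx2⟩ := Submodule.mem_inf.1 hx
    exact Submodule.mem_inf.2 ⟨hx2, Submodule.mem_inf.2 ⟨hxp, le23 hx2⟩⟩

include le12 le23 in
lemma g23 : (V1 ⊔ (V2ᗮ ⊓ V3)) ⊓ (V1ᗮ ⊓ V3) = V2ᗮ ⊓ V3 := by
  apply le_antisymm
  · intro x hx
    obtain ⟨hxs, hx13⟩ := Submodule.mem_inf.1 hx
    obtain ⟨a, ha, c, hc, hacx⟩ := Submodule.mem_sup.1 hxs
    have hap : a ∈ V1ᗮ := by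
      have : a = x - c := by rw [← hacx]; abel
      rw [this]
      exact Submodule.sub_mem _ (Submodule.mem_inf.1 hx13).1 (Lq_le_V1perp le12 hc)
    have : a ∈ V1 ⊓ V1ᗮ := Submodule.mem_inf.2 ⟨ha, hap⟩
    rw [Submodule.inf_orthogonal_eq_bot] at this
    have ha0 : a = 0 := this
    rw [← hacx, ha0, zero_add]
    exact hc
  · exact le_inf le_sup_right
      (fun x hx => Submodule.mem_inf.2 ⟨Lq_le_V1perp le12 hx, (Submodule.mem_inf.1 hx).2⟩)

include e1 e2 le12 in
lemma dim_V1perp_V2 : finrank ℝ (V1ᗮ ⊓ V2 : Submodule ℝ (Euc 4)) = 1 := by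
  rw [dim_rel_orth le12, e1, e2]

include e1 e2 e3 le12 le23 in
lemma fg_V3 : V2 ⊔ (V1ᗮ ⊓ V3) = V3 := by
  apply Submodule.eq_of_le_of_finrank_eq (sup_le le23 inf_le_right)
  have heq := Submodule.finrank_sup_add_finrank_inf_eq V2 (V1ᗮ ⊓ V3)
  rw [g13 le23, dim_V1perp_V2 e1 e2 le12, e2, dim_l3' e1 e3 le12 le23] at heq
  rw [e3]
  omega

-- distinctness for the canonical triple
include e1 le12 in
lemma gne1 : V1 ≠ V1ᗮ ⊓ V2 := by
  intro h
  have hle : V1 ≤ V1ᗮ := le_trans (le_of_eq h) inf_le_left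
  exact sub_ne_bot_of_finrank (r := 0) e1
    (eq_bot_of_le_le_orthogonal (Q := V1) (le_refl V1) hle)

include e1 le12 in
lemma gne2 : V1 ≠ V2ᗮ ⊓ V3 := by
  intro h
  have hle : V1 ≤ V1ᗮ := le_trans (le_of_eq h) (Lq_le_V1perp le12)
  exact sub_ne_bot_of_finrank (r := 0) e1
    (eq_bot_of_le_le_orthogonal (Q := V1) (le_refl V1) hle)

include e1 e2 le12 in
lemma gne3 : V1ᗮ ⊓ V2 ≠ V2ᗮ ⊓ V3 := by
  intro h
  have hle : V1ᗮ ⊓ V2 ≤ V2ᗮ := le_trans (le_of_eq h) inf_le_left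
  have : V1ᗮ ⊓ V2 = ⊥ := eq_bot_of_le_le_orthogonal (Q := V2) inf_le_right hle
  exact sub_ne_bot_of_finrank (r := 0) (dim_V1perp_V2 e1 e2 le12) this

end FlagGeo

lemma pOp_l2'_eq {V1 V2 V3 : Submodule ℝ (Euc 4)} (le12 : V1 ≤ V2) (le23 : V2 ≤ V3) :
    pOp (V1 ⊔ (V2ᗮ ⊓ V3)) = pOp V1 + (pOp V3 - pOp V2) := by
  rw [pOp_sup_of_le_orthogonal (Lq_le_V1perp le12), pOp_inf_orthogonal_of_le le23]

lemma pOp_l3'_eq {V1 V3 : Submodule ℝ (Euc 4)} (le13 : V1 ≤ V3) :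
    pOp (V1ᗮ ⊓ V3) = pOp V3 - pOp V1 :=
  pOp_inf_orthogonal_of_le le13

lemma continuous_map_family {X : Type*} [TopologicalSpace X]
    {W : X → Submodule ℝ (Euc 4)} {T : X → Euc 4 →L[ℝ] Euc 4}
    (hW : Continuous fun x => pOp (W x)) (hdW : ∀ x, finrank ℝ (W x) = 2)
    (hT : Continuous T) (hinj : ∀ x, ∀ y ∈ W x, T x y = 0 → y = 0) :
    Continuous fun x => pOp (Submodule.map (T x : Euc 4 →ₗ[ℝ] Euc 4) (W x) : Submodule ℝ (Euc 4)) := by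
  apply continuous_pOp_of_locSpan (r := 1)
  intro x₀
  obtain ⟨U, hU, v, hcv, hind, hmem, hspan⟩ := exists_locBasis (r := 1) hW hdW x₀
  refine ⟨U, hU, fun x i => T x (v x i), fun i => (hT.clm_apply (hcv i)).continuousOn, ?_⟩
  intro x hx
  constructor
  · have hdisj : Disjoint (span ℝ (range (v x)))
        (LinearMap.ker ((T x : Euc 4 →ₗ[ℝ] Euc 4))) := by
      rw [disjoint_iff, eq_bot_iff, hspan x hx]
      intro y hy
      obtain ⟨hyW, hyk⟩ := Submodule.mem_inf.1 hy
      have : T x y = 0 := hyk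
      exact hinj x y hyW this
    exact (hind x hx).map (f := (T x : Euc 4 →ₗ[ℝ] Euc 4)) hdisj
  · have h1 : (range fun i => T x (v x i)) = (T x) '' (range (v x)) := by
      rw [← Set.range_comp]; rfl
    rw [h1, ← ContinuousLinearMap.coe_coe, ← Submodule.map_span, hspan x hx]


end Infra

-- ============ assembly ============
section Assembly
open Submodule Set

lemma continuous_gr_pOp {k m : ℕ} : Continuous fun V : Gr k m => pOp V.1 :=
  continuous_induced_dom

lemma continuous_into_gr {X : Type*} [TopologicalSpace X] {k m : ℕ} {f : X → Gr k m}
    (h : Continuous fun x => pOp (f x).1) : Continuous f :=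
  continuous_induced_rng.2 h

/-- the map `𝓗 → Flag`. -/
noncomputable def fMap (x : Triples 4) : Flag123 4 :=
  ⟨(⟨x.1.1.1 ⊓ x.1.2.1.1, x.2.1⟩,
    x.1.1,
    ⟨x.1.1.1 ⊔ x.1.2.2.1, dimV3 x.1.1.2 x.1.2.2.2 x.2.2.1⟩),
   ⟨inf_le_left, le_sup_left⟩⟩

/-- the map `Flag → 𝓗`. -/
noncomputable def gMap (q : Flag123 4) : Triples 4 :=
  ⟨(q.1.2.1,
    ⟨q.1.1.1 ⊔ ((q.1.2.1.1)ᗮ ⊓ q.1.2.2.1),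
      dim_l2' q.1.1.2 q.1.2.1.2 q.1.2.2.2 q.2.1 q.2.2⟩,
    ⟨(q.1.1.1)ᗮ ⊓ q.1.2.2.1, dim_l3' q.1.1.2 q.1.2.2.2 q.2.1 q.2.2⟩),
   by
    refine ⟨?_, ?_, ?_, ?_, ?_, ?_⟩
    · rw [show q.1.2.1.1 ⊓ (q.1.1.1 ⊔ ((q.1.2.1.1)ᗮ ⊓ q.1.2.2.1)) = q.1.1.1 from g12 q.2.1]
      exact q.1.1.2
    · rw [g13 q.2.2]
      exact dim_V1perp_V2 q.1.1.2 q.1.2.1.2 q.2.1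
    · rw [g23 q.2.1 q.2.2]
      exact dim_Lq q.1.2.1.2 q.1.2.2.2 q.2.2
    · rw [g12 q.2.1, g13 q.2.2]
      exact gne1 q.1.1.2 q.2.1
    · rw [g12 q.2.1, g23 q.2.1 q.2.2]
      exact gne2 q.1.1.2 q.2.1
    · rw [g13 q.2.2, g23 q.2.1 q.2.2]
      exact gne3 q.1.1.2 q.1.2.1.2 q.2.1⟩

/-- the straight-line homotopy. -/
noncomputable def hMap (t : ℝ) (x : Triples 4) : Triples 4 :=
  ⟨(x.1.1,
    ⟨Submodule.map (opA x.1.1.1 x.1.2.1.1 t : Euc 4 →ₗ[ℝ] Euc 4) x.1.2.1.1, dim_l2t x.1.2.1.2⟩,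
    ⟨Submodule.map (opB x.1.1.1 x.1.2.1.1 t : Euc 4 →ₗ[ℝ] Euc 4) x.1.2.2.1,
      dim_l3t x.1.2.2.2 x.2.1 x.2.2.1 x.2.2.2.2.1⟩),
   goodTriple_t x.1.1.2 x.1.2.1.2 x.1.2.2.2 x.2.1 x.2.2.1 x.2.2.2.1
     x.2.2.2.2.1 x.2.2.2.2.2.1⟩

lemma hMap_zero (x : Triples 4) : hMap 0 x = x := by
  apply Subtype.ext
  refine Prod.ext rfl (Prod.ext ?_ ?_)
  · exact Subtype.ext opA_zero
  · exact Subtype.ext opB_zero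

lemma hMap_one (x : Triples 4) : hMap 1 x = gMap (fMap x) := by
  apply Subtype.ext
  refine Prod.ext rfl (Prod.ext ?_ ?_)
  · exact Subtype.ext
      (opA_one x.1.1.2 x.1.2.1.2 x.1.2.2.2 x.2.1 x.2.2.1 x.2.2.2.1 x.2.2.2.2.2.1)
  · exact Subtype.ext
      (opB_one x.1.1.2 x.1.2.1.2 x.1.2.2.2 x.2.1 x.2.2.1 x.2.2.2.1 x.2.2.2.2.1)

lemma fg_id (q : Flag123 4) : fMap (gMap q) = q := by
  apply Subtype.ext
  refine Prod.ext ?_ (Prod.ext rfl ?_)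
  · exact Subtype.ext (g12 q.2.1)
  · exact Subtype.ext (fg_V3 q.1.1.2 q.1.2.1.2 q.1.2.2.2 q.2.1 q.2.2)

-- continuity of the basic projection fields on Triples 4
lemma cT1 : Continuous fun x : Triples 4 => pOp x.1.1.1 :=
  continuous_gr_pOp.comp (continuous_fst.comp continuous_subtype_val)
lemma cT2 : Continuous fun x : Triples 4 => pOp x.1.2.1.1 :=
  continuous_gr_pOp.comp (continuous_fst.comp (continuous_snd.comp continuous_subtype_val))
lemma cT3 : Continuous fun x : Triples 4 => pOp x.1.2.2.1 :=
  continuous_gr_pOp.comp (continuous_snd.comp (continuous_snd.comp continuous_subtype_val))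

lemma fMap_continuous : Continuous fMap := by
  apply Continuous.subtype_mk
  refine Continuous.prodMk ?_ (Continuous.prodMk ?_ ?_)
  · exact continuous_into_gr (continuous_pOp_inf1 cT1 cT2
      (fun x => x.1.1.2) (fun x => x.1.2.1.2) (fun x => x.2.1))
  · exact continuous_fst.comp continuous_subtype_val
  · exact continuous_into_gr (continuous_pOp_sup3 cT1 cT3
      (fun x => x.1.1.2) (fun x => x.1.2.2.2)
      (fun x => dimV3 x.1.1.2 x.1.2.2.2 x.2.2.1))

lemma cF1 : Continuous fun q : Flag123 4 => pOp q.1.1.1 :=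
  continuous_gr_pOp.comp (continuous_fst.comp continuous_subtype_val)
lemma cF2 : Continuous fun q : Flag123 4 => pOp q.1.2.1.1 :=
  continuous_gr_pOp.comp (continuous_fst.comp (continuous_snd.comp continuous_subtype_val))
lemma cF3 : Continuous fun q : Flag123 4 => pOp q.1.2.2.1 :=
  continuous_gr_pOp.comp (continuous_snd.comp (continuous_snd.comp continuous_subtype_val))

lemma gMap_continuous : Continuous gMap := by
  apply Continuous.subtype_mk
  refine Continuous.prodMk ?_ (Continuous.prodMk ?_ ?_)
  · exact continuous_fst.comp (continuous_snd.comp continuous_subtype_val)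
  · apply continuous_into_gr
    have he : (fun q : Flag123 4 => pOp ((gMap q).1.2.1.1)) =
        fun q => pOp q.1.1.1 + (pOp q.1.2.2.1 - pOp q.1.2.1.1) := by
      funext q
      exact pOp_l2'_eq q.2.1 q.2.2
    -- note: the submodule under the mk is exactly the one in gMap
    show Continuous fun q : Flag123 4 => pOp (q.1.1.1 ⊔ ((q.1.2.1.1)ᗮ ⊓ q.1.2.2.1))
    have he2 : (fun q : Flag123 4 => pOp (q.1.1.1 ⊔ ((q.1.2.1.1)ᗮ ⊓ q.1.2.2.1))) =
        fun q => pOp q.1.1.1 + (pOp q.1.2.2.1 - pOp q.1.2.1.1) := by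
      funext q
      exact pOp_l2'_eq q.2.1 q.2.2
    rw [he2]
    exact cF1.add (cF3.sub cF2)
  · apply continuous_into_gr
    show Continuous fun q : Flag123 4 => pOp ((q.1.1.1)ᗮ ⊓ q.1.2.2.1)
    have he2 : (fun q : Flag123 4 => pOp ((q.1.1.1)ᗮ ⊓ q.1.2.2.1)) =
        fun q => pOp q.1.2.2.1 - pOp q.1.1.1 := by
      funext q
      exact pOp_l3'_eq (le_trans q.2.1 q.2.2)
    rw [he2]
    exact cF3.sub cF1

lemma hMap_continuous :
    Continuous fun p : unitInterval × Triples 4 => hMap (p.1 : ℝ) p.2 := by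
  have ct : Continuous fun p : unitInterval × Triples 4 => (p.1 : ℝ) :=
    continuous_subtype_val.comp continuous_fst
  have c1 : Continuous fun p : unitInterval × Triples 4 => pOp p.2.1.1.1 :=
    cT1.comp continuous_snd
  have c2 : Continuous fun p : unitInterval × Triples 4 => pOp p.2.1.2.1.1 :=
    cT2.comp continuous_snd
  have c3 : Continuous fun p : unitInterval × Triples 4 => pOp p.2.1.2.2.1 :=
    cT3.comp continuous_snd
  have cV1 : Continuous fun p : unitInterval × Triples 4 =>
      pOp (p.2.1.1.1 ⊓ p.2.1.2.1.1 : Submodule ℝ (Euc 4)) :=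
    continuous_pOp_inf1 c1 c2 (fun p => p.2.1.1.2) (fun p => p.2.1.2.1.2)
      (fun p => p.2.2.1)
  have cA : Continuous fun p : unitInterval × Triples 4 =>
      opA p.2.1.1.1 p.2.1.2.1.1 (p.1 : ℝ) := by
    unfold opA
    exact continuous_const.sub (ct.smul (c1.sub cV1))
  have cB : Continuous fun p : unitInterval × Triples 4 =>
      opB p.2.1.1.1 p.2.1.2.1.1 (p.1 : ℝ) := by
    unfold opB
    exact continuous_const.sub (ct.smul cV1)
  apply Continuous.subtype_mk
  refine Continuous.prodMk ?_ (Continuous.prodMk ?_ ?_)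
  · exact (continuous_fst.comp continuous_subtype_val).comp continuous_snd
  · apply continuous_into_gr
    exact continuous_map_family c2 (fun p => p.2.1.2.1.2) cA
      (fun p => opA_inj (p.1 : ℝ))
  · apply continuous_into_gr
    exact continuous_map_family c3 (fun p => p.2.1.2.2.2) cB
      (fun p => opB_inj p.2.2.1 p.2.2.2.1 p.2.2.2.2.2.1 (p.1 : ℝ))

end Assembly


-- STATEMENT 9
theorem stmt9 : Nonempty (ContinuousMap.HomotopyEquiv (Triples 4) (Flag123 4)) := by
  set fCM : C(Triples 4, Flag123 4) := ⟨fMap, fMap_continuous⟩ with hf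
  set gCM : C(Flag123 4, Triples 4) := ⟨gMap, gMap_continuous⟩ with hg
  have H : ContinuousMap.Homotopy (ContinuousMap.id (Triples 4)) (gCM.comp fCM) :=
    { toContinuousMap := ⟨fun p => hMap (p.1 : ℝ) p.2, hMap_continuous⟩
      map_zero_left := fun x => hMap_zero x
      map_one_left := fun x => hMap_one x }
  refine ⟨⟨fCM, gCM, ?_, ?_⟩⟩
  · exact ContinuousMap.Homotopic.symm ⟨H⟩
  · have hcomp : fCM.comp gCM = ContinuousMap.id (Flag123 4) := ContinuousMap.ext fg_id
    rw [hcomp]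

end
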